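/- For finite strictly decreasing lists p = [p₀, p₁, …, p_m] and q = [q₀, q₁, …, q_n] of ordinals (entries in strictly decreasing order), p precedes q in the lexicographic order List.Lex (· < ·) if and only if ω^{p₀} + ω^{p₁} + ⋯ + ω^{p_m} < ω^{q₀} + ω^{q₁} + ⋯ + ω^{q_n} in ordinal arithmetic (where the empty sum is 0). In particular, the map sending a strictly decreasing list p to the ordinal sum of ω^{p_i} over its entries in order is an order embedding of the paper's default ordering of [Ord]^{<ω} into the ordinals. -/

import Mathlib

open Ordinal

lemma sum_omega_opow_lt_of_forall_lt (l : List Ordinal) (a : Ordinal)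
    (h : ∀ x ∈ l, x < a) : (l.map fun x => omega0 ^ x).sum < omega0 ^ a := by
  induction l with
  | nil => simpa using opow_pos a omega0_pos
  | cons x l ih =>
    simp only [List.map_cons, List.sum_cons]
    exact principal_add_omega0_opow a
      ((opow_lt_opow_iff_right one_lt_omega0).2 (h x (by simp)))
      (ih fun y hy => h y (by simp [hy]))

/-- For strictly decreasing lists `p`, `q` of ordinals, `p` lexicographically precedes
`q` if and only if `ω^{p₀} + ⋯ + ω^{p_m} < ω^{q₀} + ⋯ + ω^{q_n}`. -/
theorem lex_iff_sum_omega_opow_lt (p q : List Ordinal)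
    (hp : p.Pairwise (· > ·)) (hq : q.Pairwise (· > ·)) :
    List.Lex (· < ·) p q ↔
      (p.map fun a => omega0 ^ a).sum < (q.map fun a => omega0 ^ a).sum := by
  induction p generalizing q with
  | nil =>
    cases q with
    | nil => simp
    | cons b q' =>
      simp only [List.map_nil, List.sum_nil, List.map_cons, List.sum_cons]
      constructor
      · intro _
        exact lt_of_lt_of_le (opow_pos b omega0_pos) le_self_add
      · intro _; exact List.Lex.nil
  | cons a p' ih =>
    cases q with
    | nil =>
      simp only [List.map_nil, List.sum_nil]
      constructor
      · intro h; cases h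
      · intro h; exact absurd h zero_le.not_gt
    | cons b q' =>
      have hp' : p'.Pairwise (· > ·) := hp.of_cons
      have hq' : q'.Pairwise (· > ·) := hq.of_cons
      have hpa : ∀ x ∈ p', x < a := fun x hx => (List.pairwise_cons.1 hp).1 x hx
      have hqb : ∀ x ∈ q', x < b := fun x hx => (List.pairwise_cons.1 hq).1 x hx
      simp only [List.map_cons, List.sum_cons]
      constructor
      · intro h
        cases h with
        | rel hab =>
          have h1 : omega0 ^ a + (p'.map fun x => omega0 ^ x).sum < omega0 ^ b :=
            principal_add_omega0_opow b
              ((opow_lt_opow_iff_right one_lt_omega0).2 hab)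
              (sum_omega_opow_lt_of_forall_lt p' b fun x hx => (hpa x hx).trans hab)
          exact h1.trans_le le_self_add
        | cons h' => exact add_lt_add_right ((ih q' hp' hq').1 h') _
      · intro h
        rcases lt_trichotomy a b with hab | rfl | hba
        · exact List.Lex.rel hab
        · exact List.Lex.cons ((ih q' hp' hq').2 (lt_of_add_lt_add_left h))
        · exfalso
          have : omega0 ^ b + (q'.map fun x => omega0 ^ x).sum < omega0 ^ a :=
            principal_add_omega0_opow a
              ((opow_lt_opow_iff_right one_lt_omega0).2 hba)
              (sum_omega_opow_lt_of_forall_lt q' a fun x hx => (hqb x hx).trans hba)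
          exact absurd h (not_lt.2 (this.le.trans le_self_add))
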